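/- For every real number α with -1/√2 < α < 0, there exists a unique complex number η with nonnegative real part and nonnegative imaginary part satisfying 1/√(1/2 - 2iη) + 1/√(1/2 + 2iη) = -2/α. -/
import Mathlib

open Complex Real

/-- Principal branch of the complex square root. -/
noncomputable def sqrtC (z : ℂ) : ℂ := z ^ ((1 : ℂ)/2)

lemma sqrtC_sq {z : ℂ} (hz : z ≠ 0) : sqrtC z ^ 2 = z := by
  rw [sqrtC, sq, ← cpow_add _ _ hz]
  norm_num

lemma log_half_im (z : ℂ) :
    (Complex.log z * ((1:ℂ)/2)).im = z.arg / 2 := by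
  simp [Complex.mul_im, Complex.log_im, Complex.log_re]
  ring

lemma sqrtC_re_nonneg (z : ℂ) : 0 ≤ (sqrtC z).re := by
  rcases eq_or_ne z 0 with h | h
  · simp [sqrtC, h, zero_cpow (by norm_num : (1:ℂ)/2 ≠ 0)]
  · rw [sqrtC, cpow_def_of_ne_zero h, exp_re, log_half_im z]
    have h1 : -(π/2) ≤ z.arg / 2 := by
      have := Complex.neg_pi_lt_arg z; linarith
    have h2 : z.arg / 2 ≤ π/2 := by
      have := Complex.arg_le_pi z; linarith
    have := Real.cos_nonneg_of_mem_Icc ⟨h1, h2⟩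
    positivity

lemma sqrtC_re_pos {z : ℂ} (hz : 0 < z.re) : 0 < (sqrtC z).re := by
  have h : z ≠ 0 := by
    intro h0; rw [h0] at hz; simp at hz
  rw [sqrtC, cpow_def_of_ne_zero h, exp_re, log_half_im z]
  have harg : |z.arg| < π/2 := Complex.abs_arg_lt_pi_div_two_iff.mpr (Or.inl hz)
  rw [abs_lt] at harg
  have h1 : -(π/2) < z.arg / 2 := by have := Real.pi_pos; linarith [harg.1]
  have h2 : z.arg / 2 < π/2 := by have := Real.pi_pos; linarith [harg.2]
  have := Real.cos_pos_of_mem_Ioo ⟨h1, h2⟩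
  positivity

lemma sqrtC_ofReal {x : ℝ} (hx : 0 ≤ x) : sqrtC (x : ℂ) = (Real.sqrt x : ℂ) := by
  rw [sqrtC, show ((1:ℂ)/2) = ((1/2:ℝ):ℂ) by norm_num, ← Complex.ofReal_cpow hx,
    ← Real.sqrt_eq_rpow]

set_option maxHeartbeats 1000000 in
/-- For every real `α` with `-1/√2 < α < 0`, there is a unique complex `η` with
nonnegative real and imaginary parts satisfying
`1/√(1/2 - 2iη) + 1/√(1/2 + 2iη) = -2/α`. -/
theorem eta_exists_unique (α : ℝ) (hα₁ : -1 / Real.sqrt 2 < α) (hα₂ : α < 0) :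
    ∃! η : ℂ, 0 ≤ η.re ∧ 0 ≤ η.im ∧
      1 / sqrtC (1/2 - 2 * I * η) + 1 / sqrtC (1/2 + 2 * I * η) = -2 / (α : ℂ) := by
  obtain ⟨c, hc_def⟩ : ∃ c : ℝ, c = -2/α := ⟨_, rfl⟩
  have h2pos : (0:ℝ) < Real.sqrt 2 := Real.sqrt_pos.mpr (by norm_num)
  have h1 : -1 < α * Real.sqrt 2 := (div_lt_iff₀ h2pos).mp hα₁
  have hsq2 : Real.sqrt 2 ^ 2 = 2 := Real.sq_sqrt (by norm_num)
  have hα2 : 2 * α^2 < 1 := by nlinarith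
  have hcsq : c^2 = 4 / α^2 := by rw [hc_def, div_pow]; norm_num
  have hc8 : 8 < c^2 := by
    rw [hcsq, lt_div_iff₀ (by nlinarith : (0:ℝ) < α^2)]; nlinarith
  have hc0 : 0 < c := by
    rw [hc_def, div_pos_iff]; right; constructor <;> linarith
  have hcC : (-2 : ℂ) / (α : ℂ) = ((c : ℝ) : ℂ) := by
    rw [hc_def]; push_cast; ring
  obtain ⟨d, hd_def⟩ : ∃ d : ℝ, d = Real.sqrt (1 + c^2) := ⟨_, rfl⟩
  have hd2 : d^2 = 1 + c^2 := by rw [hd_def]; exact Real.sq_sqrt (by positivity)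
  have hd3 : 3 < d := by nlinarith [Real.sqrt_nonneg (1 + c^2)]
  obtain ⟨s, hs_def⟩ : ∃ s : ℝ, s = (1+d)/c^2 := ⟨_, rfl⟩
  have hs0 : 0 < s := by rw [hs_def]; apply div_pos <;> nlinarith
  have hseq : c^2 * s^2 = 1 + 2*s := by
    rw [hs_def]; field_simp; nlinarith
  have hs12 : s < 1/2 := by
    rw [hs_def, div_lt_iff₀ (by positivity)]; nlinarith
  obtain ⟨t, ht_def⟩ : ∃ t : ℝ, t = Real.sqrt (1/4 - s^2) / 2 := ⟨_, rfl⟩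
  have ht2 : (2*t)^2 = 1/4 - s^2 := by
    rw [ht_def, mul_div_cancel₀ _ (by norm_num : (2:ℝ) ≠ 0)]
    exact Real.sq_sqrt (by nlinarith)
  have ht0 : 0 < t := by
    rw [ht_def]
    exact div_pos (Real.sqrt_pos.mpr (by nlinarith)) (by norm_num)
  have htQ : 0 < 1/2 - 2*t := by nlinarith
  have htP : 0 < 1/2 + 2*t := by nlinarith
  -- the candidate solution
  refine ⟨I * (t : ℂ), ⟨by simp, by simp [ht0.le], ?_⟩, ?_⟩
  · -- existence
    have e1 : (1/2 : ℂ) - 2*I*(I*(t:ℂ)) = (((1/2 + 2*t : ℝ)):ℂ) := by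
      push_cast
      linear_combination (-2*(t:ℂ)) * Complex.I_mul_I
    have e2 : (1/2 : ℂ) + 2*I*(I*(t:ℂ)) = (((1/2 - 2*t : ℝ)):ℂ) := by
      push_cast
      linear_combination (2*(t:ℂ)) * Complex.I_mul_I
    rw [e1, e2, sqrtC_ofReal htP.le, sqrtC_ofReal htQ.le, hcC]
    norm_cast
    -- real computation
    set P : ℝ := 1/2 + 2*t
    set Q : ℝ := 1/2 - 2*t
    have hP : Real.sqrt P ^ 2 = P := Real.sq_sqrt htP.le
    have hQ : Real.sqrt Q ^ 2 = Q := Real.sq_sqrt htQ.le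
    have hPpos : 0 < Real.sqrt P := Real.sqrt_pos.mpr htP
    have hQpos : 0 < Real.sqrt Q := Real.sqrt_pos.mpr htQ
    have hmul : Real.sqrt P * Real.sqrt Q = s := by
      rw [← Real.sqrt_mul htP.le]
      rw [show P * Q = s^2 by simp only [P, Q]; nlinarith]
      exact Real.sqrt_sq hs0.le
    have hadd : Real.sqrt P + Real.sqrt Q = c * s := by
      have hsq : (Real.sqrt P + Real.sqrt Q)^2 = (c*s)^2 := by
        have : P + Q = 1 := by simp only [P, Q]; ring
        nlinarith
      have h1 : Real.sqrt P + Real.sqrt Q = Real.sqrt ((Real.sqrt P + Real.sqrt Q)^2) :=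
        (Real.sqrt_sq (by positivity)).symm
      rw [h1, hsq, Real.sqrt_sq (by positivity)]
    field_simp
    nlinarith [hmul, hadd, hPpos, hQpos, hs0]
  · -- uniqueness
    rintro η ⟨hx, hy, heq⟩
    rw [hcC] at heq
    set A : ℂ := 1/2 - 2*I*η with hA_def
    set B : ℂ := 1/2 + 2*I*η with hB_def
    have hAre : A.re = 1/2 + 2*η.im := by
      rw [hA_def]
      simp [Complex.sub_re, Complex.mul_re, Complex.mul_im]
    have hArepos : 0 < A.re := by rw [hAre]; linarith
    have hA0 : A ≠ 0 := fun h0 => by simp [h0] at hArepos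
    have hB0 : B ≠ 0 := by
      intro h0
      have hη : η = I/4 := by
        have h := hB_def ▸ h0
        linear_combination (-I/2) * h + η * Complex.I_mul_I
      have hA1 : A = 1 := by
        rw [hA_def, hη]
        linear_combination (-1/2 : ℂ) * Complex.I_mul_I
      rw [hA1, h0] at heq
      have : sqrtC 1 = 1 := by simp [sqrtC]
      rw [this] at heq
      have : sqrtC 0 = 0 := by
        simp [sqrtC, zero_cpow (by norm_num : (1:ℂ)/2 ≠ 0)]
      rw [this] at heq
      simp at heq
      have : c = 1 := by exact_mod_cast heq.symm
      nlinarith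
    set a : ℂ := sqrtC A with ha_def
    set b : ℂ := sqrtC B with hb_def
    have ha2 : a^2 = A := sqrtC_sq hA0
    have hb2 : b^2 = B := sqrtC_sq hB0
    have ha0 : a ≠ 0 := fun h => hA0 (by rw [← ha2, h]; ring)
    have hb0 : b ≠ 0 := fun h => hB0 (by rw [← hb2, h]; ring)
    have haRe : 0 < a.re := sqrtC_re_pos hArepos
    have hbRe : 0 ≤ b.re := sqrtC_re_nonneg B
    -- derive the algebraic equation
    have hadd : a + b = (c:ℂ) * (a * b) := by
      field_simp at heq
      linear_combination heq
    have hAB1 : a^2 + b^2 = 1 := by rw [ha2, hb2, hA_def, hB_def]; ring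
    set p : ℂ := a * b with hp_def
    have hp : (c:ℂ)^2 * p^2 = 1 + 2*p := by
      have hsq : (a+b)^2 = (c:ℂ)^2 * p^2 := by rw [hadd]; ring
      linear_combination hAB1 - hsq
    have hseqC : (c:ℂ)^2 * (s:ℂ)^2 = 1 + 2*(s:ℂ) := by exact_mod_cast hseq
    have key : (p - (s:ℂ)) * ((c:ℂ)^2 * (p + (s:ℂ)) - 2) = 0 := by
      linear_combination hp - hseqC
    rcases mul_eq_zero.mp key with hcase | hcase
    · -- p = s : the genuine case
      have hps : p = (s:ℂ) := by linear_combination hcase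
      have hABp : (1:ℂ)/4 + 4*η^2 = (s:ℂ)^2 := by
        have h1 : p^2 = A * B := by rw [hp_def, mul_pow, ha2, hb2]
        have h2 : A * B = 1/4 + 4*η^2 := by
          rw [hA_def, hB_def]
          linear_combination (-4*η^2) * Complex.I_mul_I
        rw [hps] at h1
        linear_combination h1.symm + h2 + (8*η^2) * Complex.I_mul_I
      have ht2C : (2*(t:ℂ))^2 = 1/4 - (s:ℂ)^2 := by
        have h := congrArg (fun x : ℝ => (x:ℂ)) ht2
        push_cast at h
        linear_combination h
      have hfac : (η - I*(t:ℂ)) * (η + I*(t:ℂ)) = 0 := by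
        linear_combination hABp/4 + ht2C/4 + (-(t:ℂ)^2) * Complex.I_mul_I
      rcases mul_eq_zero.mp hfac with h | h
      · linear_combination h
      · exfalso
        have : η = -(I*(t:ℂ)) := by linear_combination h
        have him : η.im = -t := by rw [this]; simp
        rw [him] at hy
        linarith
    · -- p = 2/c² - s : impossible since p would be a negative real
      exfalso
      have hcne : (c:ℂ) ≠ 0 := by exact_mod_cast hc0.ne'
      set r : ℝ := 2/c^2 - s with hr_def
      have hrneg : r < 0 := by
        rw [hr_def, hs_def]
        rw [div_sub_div_same, div_neg_iff]
        right
        constructor <;> nlinarith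
      have hpe : p = ((r:ℝ):ℂ) := by
        rw [hr_def]
        push_cast
        have hc2ne : (c:ℂ)^2 ≠ 0 := pow_ne_zero 2 hcne
        field_simp
        linear_combination hcase
      have hpim : p.im = 0 := by rw [hpe]; simp
      have hpre : p.re = r := by rw [hpe]; simp
      have him : a.re * b.im + a.im * b.re = 0 := by
        have : p.im = a.re * b.im + a.im * b.re := by
          simp [hp_def, Complex.mul_im]
        linarith [this ▸ hpim]
      have hre : p.re = a.re * b.re - a.im * b.im := by
        rw [hp_def, Complex.mul_re]
      have hkey : a.re * p.re = (a.re^2 + a.im^2) * b.re := by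
        rw [hre]
        linear_combination (-a.im) * him
      rw [hpre] at hkey
      have h5 : a.re * r < 0 := mul_neg_of_pos_of_neg haRe hrneg
      have h6 : 0 ≤ (a.re^2 + a.im^2) * b.re := mul_nonneg (by positivity) hbRe
      linarith
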